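/- The number of τ-runs in a string of length n is O(n/τ); concretely, a string of length n contains at most 2n/τ distinct τ-runs (for τ ≥ 4). -/

import Mathlib

/-- `P` occurs at (0-indexed) position `i` of `T`. -/
def occursAt {α : Type*} (P T : List α) (i : ℕ) : Prop :=
  (T.drop i).take P.length = P

/-- `ρ` is a period of `P`. -/
def isPeriod {α : Type*} (P : List α) (ρ : ℕ) : Prop :=
  0 < ρ ∧ ∀ k, k + ρ < P.length → P[k]? = P[k + ρ]?

/-- The smallest period of `P`. -/
noncomputable def per {α : Type*} (P : List α) : ℕ :=
  sInf {ρ | isPeriod P ρ}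

/-- The fragment of `S` on (0-indexed, inclusive) positions `i..j`. -/
def frag {α : Type*} (S : List α) (i j : ℕ) : List α :=
  (S.drop i).take (j - i + 1)

/-- The fragment `S[i..j]` (0-indexed, inclusive) is a `τ`-run of `S`:
length greater than `3τ`, smallest period at most `τ/4`, and maximal, i.e.,
it cannot be extended in either direction without its smallest period changing. -/
def isTauRun {α : Type*} (S : List α) (τ i j : ℕ) : Prop :=
  i ≤ j ∧ j < S.length ∧ 3 * τ < j - i + 1 ∧ per (frag S i j) ≤ τ / 4 ∧
  (i = 0 ∨ per (frag S (i - 1) j) ≠ per (frag S i j)) ∧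
  (j = S.length - 1 ∨ per (frag S i (j + 1)) ≠ per (frag S i j))

section Aux

variable {α : Type*}

/-- Periodicity of `S` on the (inclusive) interval `[i, j]`. -/
def PerOn (S : List α) (i j ρ : ℕ) : Prop :=
  ∀ k, i ≤ k → k + ρ ≤ j → S[k]? = S[k + ρ]?

lemma frag_get? (S : List α) (i j k : ℕ) (hk : k ≤ j - i) :
    (frag S i j)[k]? = S[i + k]? := by
  unfold frag
  rw [List.getElem?_take_of_lt (by omega), List.getElem?_drop]

lemma isPeriod_frag_iff {S : List α} {i j ρ : ℕ} (hij : i ≤ j) (hj : j < S.length) :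
    isPeriod (frag S i j) ρ ↔ 0 < ρ ∧ PerOn S i j ρ := by
  have hlen : (frag S i j).length = j - i + 1 := by
    unfold frag; rw [List.length_take, List.length_drop]; omega
  constructor
  · rintro ⟨h0, h⟩
    refine ⟨h0, fun k hk hk2 => ?_⟩
    have h' := h (k - i) (by rw [hlen]; omega)
    rw [frag_get? S i j (k - i) (by omega), frag_get? S i j (k - i + ρ) (by omega)] at h'
    have e1 : i + (k - i) = k := by omega
    have e2 : i + (k - i + ρ) = k + ρ := by omega
    rwa [e1, e2] at h'
  · rintro ⟨h0, h⟩
    refine ⟨h0, fun k hk => ?_⟩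
    rw [hlen] at hk
    rw [frag_get? S i j k (by omega), frag_get? S i j (k + ρ) (by omega)]
    have e : i + (k + ρ) = (i + k) + ρ := by omega
    rw [e]
    exact h (i + k) (by omega) (by omega)

lemma per_isPeriod (P : List α) : isPeriod P (per P) := by
  have h : per P ∈ {ρ | isPeriod P ρ} :=
    Nat.sInf_mem ⟨P.length + 1, by omega, fun k hk => absurd hk (by omega)⟩
  exact h

lemma per_le {P : List α} {ρ : ℕ} (h : isPeriod P ρ) : per P ≤ ρ :=
  Nat.sInf_le h

lemma PerOn.mono {S : List α} {i j i' j' ρ : ℕ} (h : PerOn S i j ρ)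
    (h1 : i ≤ i') (h2 : j' ≤ j) : PerOn S i' j' ρ :=
  fun k hk hk2 => h k (le_trans h1 hk) (le_trans hk2 h2)

lemma PerOn.glue {S : List α} {i j i' j' ρ : ℕ} (h : PerOn S i j ρ) (h' : PerOn S i' j' ρ)
    (hii : i ≤ i') (hov : i' + ρ ≤ j + 1) (hjj : j ≤ j') : PerOn S i j' ρ := by
  intro k hk hk2
  by_cases hc : k + ρ ≤ j
  · exact h k hk hc
  · exact h' k (by omega) hk2

/-- Euclid-style subtraction step for periods. -/
lemma PerOn.sub {S : List α} {i j p q : ℕ} (hq : 0 < q) (h : q < p)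
    (hP : PerOn S i j p) (hQ : PerOn S i j q) (hlen : i + p + q ≤ j + 1) :
    PerOn S i j (p - q) := by
  intro k hk hk2
  by_cases hc : k + p ≤ j
  · have h1 := hP k hk hc
    have h2 := hQ (k + (p - q)) (by omega) (by omega)
    have e : k + (p - q) + q = k + p := by omega
    rw [e] at h2
    rw [h1, ← h2]
  · have h1 := hQ (k - q) (by omega) (by omega)
    have h2 := hP (k - q) (by omega) (by omega)
    have e1 : k - q + q = k := by omega
    have e2 : k - q + p = k + (p - q) := by omega
    rw [e1] at h1
    rw [e2] at h2
    rw [← h1, h2]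

/-- Weak Fine–Wilf periodicity lemma, with explicit fuel `N`. -/
lemma fine_wilf_aux {S : List α} :
    ∀ N p q i j : ℕ, p + q ≤ N → 0 < p → 0 < q → PerOn S i j p → PerOn S i j q →
      i + p + q ≤ j + 1 → PerOn S i j (Nat.gcd p q) := by
  intro N
  induction N with
  | zero => intro p q i j h hp hq _ _ _; exact absurd hp (by omega)
  | succ N ih =>
    intro p q i j hN hp hq hP hQ hlen
    rcases lt_trichotomy p q with h | h | h
    · have hstep := PerOn.sub hp h hQ hP (by omega)
      have hres := ih (q - p) p i j (by omega) (by omega) hp hstep hP (by omega)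
      rwa [Nat.gcd_sub_self_left (le_of_lt h), Nat.gcd_comm] at hres
    · subst h
      rw [Nat.gcd_self]
      exact hP
    · have hstep := PerOn.sub hq h hP hQ hlen
      have hres := ih (p - q) q i j (by omega) (by omega) hq hstep hQ (by omega)
      rwa [Nat.gcd_sub_self_left (le_of_lt h)] at hres

/-- If `S` has period `p` on `[i,j]` and period `g` on a window `[a,b] ⊆ [i,j]` of
length at least `p + g`, then `S` has period `g` on all of `[i,j]`. -/
lemma PerOn.propagate {S : List α} {i j a b p g : ℕ} (hp : 0 < p)
    (hP : PerOn S i j p) (hW : PerOn S a b g) (hia : i ≤ a) (hbj : b ≤ j)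
    (hwin : a + p + g ≤ b + 1) : PerOn S i j g := by
  rcases Nat.eq_zero_or_pos g with rfl | hg0
  · intro k _ _; rw [Nat.add_zero]
  have A : ∀ d k, k ≤ a + d → a ≤ k → k + g ≤ j → S[k]? = S[k + g]? := by
    intro d
    induction d using Nat.strong_induction_on with
    | _ d ih =>
      intro k hkd hak hkg
      by_cases hc : k < a + p
      · exact hW k hak (by omega)
      · have h1 : S[k - p]? = S[k]? := by
          have h := hP (k - p) (by omega) (by omega)
          rwa [Nat.sub_add_cancel (by omega)] at h
        have h2 : S[k - p + g]? = S[k + g]? := by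
          have h := hP (k - p + g) (by omega) (by omega)
          rwa [show k - p + g + p = k + g by omega] at h
        rw [← h1, ← h2]
        exact ih (d - p) (by omega) (k - p) (by omega) (by omega) (by omega)
  have B : ∀ d k, a ≤ k + d → i ≤ k → k + g ≤ j → S[k]? = S[k + g]? := by
    intro d
    induction d using Nat.strong_induction_on with
    | _ d ih =>
      intro k hkd hik hkg
      by_cases hak : a ≤ k
      · exact A k k (by omega) hak hkg
      · have h1 : S[k]? = S[k + p]? := hP k hik (by omega)
        have h2 : S[k + g]? = S[k + g + p]? := hP (k + g) (by omega) (by omega)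
        have key : S[k + p]? = S[k + p + g]? := by
          by_cases hdp : a ≤ k + p
          · exact A (k + p) (k + p) (by omega) hdp (by omega)
          · exact ih (d - p) (by omega) (k + p) (by omega) (by omega) (by omega)
        rw [h1, h2, key, show k + p + g = k + g + p by omega]
  intro k hk hkg
  exact B a k (by omega) hk hkg

/-- Two distinct `τ`-runs have starting positions at least `τ` apart. -/
lemma starts_far {S : List α} {τ i j i' j' : ℕ} (hτ : 4 ≤ τ)
    (h1 : isTauRun S τ i j) (h2 : isTauRun S τ i' j') (hii : i ≤ i')
    (hne : (i, j) ≠ (i', j')) : i + τ ≤ i' := by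
  by_contra hcon
  push_neg at hcon
  obtain ⟨hij1, hj1, hlen1, hper1, hL1, hR1⟩ := h1
  obtain ⟨hij2, hj2, hlen2, hper2, hL2, hR2⟩ := h2
  set p := per (frag S i j) with hpdef
  set q := per (frag S i' j') with hqdef
  have pmem := per_isPeriod (frag S i j)
  have qmem := per_isPeriod (frag S i' j')
  rw [show per (frag S i j) = p from rfl, isPeriod_frag_iff hij1 hj1] at pmem
  rw [show per (frag S i' j') = q from rfl, isPeriod_frag_iff hij2 hj2] at qmem
  obtain ⟨hp0, hP⟩ := pmem
  obtain ⟨hq0, hQ⟩ := qmem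
  have hτ4 : τ / 4 ≤ τ := Nat.div_le_self _ _
  have hpτ : p ≤ τ := le_trans hper1 hτ4
  have hqτ : q ≤ τ := le_trans hper2 hτ4
  have hji : i + 3 * τ ≤ j := by omega
  have hji' : i' + 3 * τ ≤ j' := by omega
  set b := min j j' with hb
  have hbig : i' + 2 * τ + 1 ≤ b := by omega
  have hPov : PerOn S i' b p := hP.mono hii (by omega)
  have hQov : PerOn S i' b q := hQ.mono le_rfl (by omega)
  have hg : PerOn S i' b (Nat.gcd p q) :=
    fine_wilf_aux (p + q) p q i' b le_rfl hp0 hq0 hPov hQov (by omega)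
  set g := Nat.gcd p q with hgdef
  have hg0 : 0 < g := Nat.gcd_pos_of_pos_left _ hp0
  have hgp : g ≤ p := Nat.gcd_le_left _ hp0
  have hgq : g ≤ q := Nat.gcd_le_right _ hq0
  have hgR1 : PerOn S i j g := hP.propagate hp0 hg hii (by omega) (by omega)
  have hgR2 : PerOn S i' j' g := hQ.propagate hq0 hg le_rfl (by omega) (by omega)
  have hpg : p = g :=
    le_antisymm (per_le ((isPeriod_frag_iff hij1 hj1).mpr ⟨hg0, hgR1⟩)) hgp
  have hqg : q = g :=
    le_antisymm (per_le ((isPeriod_frag_iff hij2 hj2).mpr ⟨hg0, hgR2⟩)) hgq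
  have hpq : p = q := hpg.trans hqg.symm
  rcases eq_or_lt_of_le hii with rfl | hlt
  · -- same starting position: contradiction with right-maximality
    have hjj : j ≠ j' := fun h => hne (by rw [h])
    rcases Nat.lt_or_ge j j' with hjlt | hjge
    · have hmax : per (frag S i (j + 1)) ≠ p := hR1.resolve_left (by omega)
      have hPext : PerOn S i (j + 1) p := by
        rw [hpq]; exact hQ.mono le_rfl (by omega)
      have hple : per (frag S i (j + 1)) ≤ p :=
        per_le ((isPeriod_frag_iff (by omega) (by omega)).mpr ⟨hp0, hPext⟩)
      have hρmem := per_isPeriod (frag S i (j + 1))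
      rw [isPeriod_frag_iff (by omega) (by omega)] at hρmem
      obtain ⟨hρ0, hρ⟩ := hρmem
      have hback : p ≤ per (frag S i (j + 1)) :=
        per_le ((isPeriod_frag_iff hij1 hj1).mpr ⟨hρ0, hρ.mono le_rfl (by omega)⟩)
      exact hmax (le_antisymm hple hback)
    · have hjlt : j' < j := by omega
      have hmax : per (frag S i (j' + 1)) ≠ q := hR2.resolve_left (by omega)
      have hQext : PerOn S i (j' + 1) q := by
        rw [← hpq]; exact hP.mono le_rfl (by omega)
      have hple : per (frag S i (j' + 1)) ≤ q :=
        per_le ((isPeriod_frag_iff (by omega) (by omega)).mpr ⟨hq0, hQext⟩)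
      have hρmem := per_isPeriod (frag S i (j' + 1))
      rw [isPeriod_frag_iff (by omega) (by omega)] at hρmem
      obtain ⟨hρ0, hρ⟩ := hρmem
      have hback : q ≤ per (frag S i (j' + 1)) :=
        per_le ((isPeriod_frag_iff hij2 hj2).mpr ⟨hρ0, hρ.mono le_rfl (by omega)⟩)
      exact hmax (le_antisymm hple hback)
  · -- i < i' : contradiction with left-maximality of the second run
    have hmax : per (frag S (i' - 1) j') ≠ q := hL2.resolve_left (by omega)
    have hUnion : PerOn S (i' - 1) j' q := by
      rw [← hpq]
      rcases Nat.le_total j' j with hc | hc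
      · exact hP.mono (by omega) hc
      · have hglue : PerOn S i j' p := by
          refine hP.glue ?_ (le_of_lt hlt) (by omega) hc
          rw [hpq]; exact hQ
        exact hglue.mono (by omega) le_rfl
    have hple : per (frag S (i' - 1) j') ≤ q :=
      per_le ((isPeriod_frag_iff (by omega) hj2).mpr ⟨hq0, hUnion⟩)
    have hρmem := per_isPeriod (frag S (i' - 1) j')
    rw [isPeriod_frag_iff (by omega) hj2] at hρmem
    obtain ⟨hρ0, hρ⟩ := hρmem
    have hback : q ≤ per (frag S (i' - 1) j') :=
      per_le ((isPeriod_frag_iff hij2 hj2).mpr ⟨hρ0, hρ.mono (by omega) le_rfl⟩)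
    exact hmax (le_antisymm hple hback)

end Aux

/-- A string of length `n` contains at most `2n/τ` distinct `τ`-runs. -/
theorem number_of_tau_runs {α : Type*} (S : List α) (τ : ℕ) (hτ : 4 ≤ τ) :
    Set.ncard {p : ℕ × ℕ | isTauRun S τ p.1 p.2} ≤ 2 * S.length / τ := by
  classical
  have hτ0 : 0 < τ := by omega
  set X := {p : ℕ × ℕ | isTauRun S τ p.1 p.2} with hX
  have key : ∀ pr qr : ℕ × ℕ, pr ∈ X → qr ∈ X → pr ≠ qr → pr.1 ≤ qr.1 →
      pr.1 + τ ≤ qr.1 := by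
    rintro ⟨a, b⟩ ⟨c, d⟩ ha hc hne hle
    exact starts_far hτ ha hc hle hne
  have hinj : Set.InjOn (fun p : ℕ × ℕ => p.1 / τ) X := by
    rintro pr hpr qr hqr hfd
    by_contra hne
    have step : ∀ u v : ℕ × ℕ, u ∈ X → v ∈ X → u ≠ v → u.1 ≤ v.1 →
        u.1 / τ = v.1 / τ → False := by
      intro u v hu hv huv hle hfd'
      have h1 := key u v hu hv huv hle
      have h2 : u.1 / τ + 1 ≤ v.1 / τ := by
        rw [← Nat.add_div_right u.1 hτ0]
        exact Nat.div_le_div_right (by omega)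
      exact Nat.not_succ_le_self _ (hfd' ▸ h2)
    rcases Nat.le_total pr.1 qr.1 with hle | hle
    · exact step pr qr hpr hqr hne hle hfd
    · exact step qr pr hqr hpr (Ne.symm hne) hle hfd.symm
  have himg : (fun p : ℕ × ℕ => p.1 / τ) '' X ⊆ Set.Iio (2 * S.length / τ) := by
    rintro x ⟨⟨a, b⟩, ha, rfl⟩
    simp only [Set.mem_Iio]
    obtain ⟨h1, h2, h3, -⟩ := ha
    have hstep : a / τ + 1 ≤ 2 * S.length / τ := by
      rw [← Nat.add_div_right a hτ0]
      exact Nat.div_le_div_right (by omega)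
    exact lt_of_lt_of_le (Nat.lt_succ_self _) hstep
  calc X.ncard = ((fun p : ℕ × ℕ => p.1 / τ) '' X).ncard :=
        (Set.ncard_image_of_injOn hinj).symm
    _ ≤ (Set.Iio (2 * S.length / τ)).ncard := Set.ncard_le_ncard himg (Set.finite_Iio _)
    _ = 2 * S.length / τ := by
        rw [← Finset.coe_Iio, Set.ncard_coe_finset, Nat.card_Iio]
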